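/- Let S ⊆ 2^ω be the eventually-zero sequences, fix a bijection c : S → ℕ∖{0}, and for a countable set I ⊆ 2^ω ∖ S define the structure M_I in the language {E_n : n ∈ ω} with universe {(η,n) : η ∈ S, n < c(η)} ∪ (I × ω), where (η_1,n_1) E_m (η_2,n_2) iff η_1↾m = η_2↾m. Then for countable I, J ⊆ 2^ω ∖ S, M_I ≅ M_J if and only if I = J. -/
import Mathlib


/-- The eventually-zero sequences in Cantor space. -/
def evZero : Set (ℕ → Bool) := {η | ∃ N, ∀ n, N ≤ n → η n = false}

/-- The universe of the structure `M_I`: pairs `(η, n)` with `η ∈ S` (eventually zero) and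
`n < c(η)`, together with `I × ω`. -/
def univM (c : evZero → ℕ) (I : Set (ℕ → Bool)) : Set ((ℕ → Bool) × ℕ) :=
  {p | (∃ h : p.1 ∈ evZero, p.2 < c ⟨p.1, h⟩) ∨ p.1 ∈ I}

/-- The `E_∞`-class of an eventually-zero `η` is in bijection with `Fin (c η)`. -/
def classFin (c : evZero → ℕ) (I : Set (ℕ → Bool)) (hIS : ∀ η ∈ I, η ∉ evZero)
    {η : ℕ → Bool} (hη : η ∈ evZero) :
    {q : ↥(univM c I) // q.1.1 = η} ≃ Fin (c ⟨η, hη⟩) where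
  toFun q := ⟨q.1.1.2, by
    rcases q.1.2 with ⟨h, hlt⟩ | hI
    · have he : (⟨q.1.1.1, h⟩ : evZero) = ⟨η, hη⟩ := Subtype.ext q.2
      rwa [he] at hlt
    · exact absurd (show q.1.1.1 ∈ evZero from q.2.symm ▸ hη) (hIS _ hI)⟩
  invFun k := ⟨⟨(η, k.1), Or.inl ⟨hη, k.2⟩⟩, rfl⟩
  left_inv q := by
    apply Subtype.ext; apply Subtype.ext
    exact Prod.ext q.2.symm rfl
  right_inv k := rfl

lemma aux_subset (c : evZero → ℕ) (hc0 : ∀ η, c η ≠ 0) (hcinj : Function.Injective c)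
    (I J : Set (ℕ → Bool)) (hIS : ∀ η ∈ I, η ∉ evZero) (hJS : ∀ η ∈ J, η ∉ evZero)
    (f : ↥(univM c I) ≃ ↥(univM c J))
    (hf : ∀ (p q : ↥(univM c I)) (m : ℕ),
          (∀ k < m, p.1.1 k = q.1.1 k) ↔ (∀ k < m, (f p).1.1 k = (f q).1.1 k)) :
    I ⊆ J := by
  have hsame : ∀ p q : ↥(univM c I), p.1.1 = q.1.1 → (f p).1.1 = (f q).1.1 := by
    intro p q h; funext k
    exact (hf p q (k+1)).mp (fun j _ => by rw [h]) k (Nat.lt_succ_self k)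
  have hsame' : ∀ p q : ↥(univM c I), (f p).1.1 = (f q).1.1 → p.1.1 = q.1.1 := by
    intro p q h; funext k
    exact (hf p q (k+1)).mpr (fun j _ => by rw [h]) k (Nat.lt_succ_self k)
  have stepA : ∀ (p : ↥(univM c I)), p.1.1 ∈ evZero → (f p).1.1 = p.1.1 := by
    intro p hη
    set η := p.1.1 with hηdef
    set σ := (f p).1.1 with hσdef
    have e2 : {q : ↥(univM c I) // q.1.1 = η} ≃ {r : ↥(univM c J) // r.1.1 = σ} :=
      { toFun := fun q => ⟨f q.1, hsame q.1 p q.2⟩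
        invFun := fun r => ⟨f.symm r.1, hsame' (f.symm r.1) p (by
          rw [Equiv.apply_symm_apply]; exact r.2)⟩
        left_inv := fun q => Subtype.ext (f.symm_apply_apply q.1)
        right_inv := fun r => Subtype.ext (f.apply_symm_apply r.1) }
    rcases (f p).2 with ⟨hσe, _⟩ | hσJ
    · have e3 : Fin (c ⟨η, hη⟩) ≃ Fin (c ⟨σ, hσe⟩) :=
        ((classFin c I hIS hη).symm.trans e2).trans (classFin c J hJS hσe)
      have hcard : c ⟨η, hη⟩ = c ⟨σ, hσe⟩ := by
        simpa using Fintype.card_congr e3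
      have : (⟨η, hη⟩ : evZero) = ⟨σ, hσe⟩ := hcinj hcard
      exact (congrArg Subtype.val this).symm
    · exfalso
      have inj : Function.Injective
          (fun n : ℕ => (classFin c I hIS hη) (e2.symm ⟨⟨(σ, n), Or.inr hσJ⟩, rfl⟩)) := by
        intro a b hab
        have h1 := e2.symm.injective ((classFin c I hIS hη).injective hab)
        have h2 : (σ, a) = (σ, b) := congrArg (fun x => x.1.1) h1
        exact congrArg Prod.snd h2
      haveI := Finite.of_injective _ inj
      exact not_finite ℕ
  intro η hη
  have hp : (η, 0) ∈ univM c I := Or.inr hη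
  set p : ↥(univM c I) := ⟨(η, 0), hp⟩ with hpdef
  have hσ : (f p).1.1 = η := by
    funext k
    set m := k + 1 with hm
    set τ : ℕ → Bool := fun j => if j < m then η j else false with hτdef
    have hτ : τ ∈ evZero := ⟨m, fun n hn => if_neg (by omega)⟩
    set q : ↥(univM c I) := ⟨(τ, 0), Or.inl ⟨hτ, Nat.pos_of_ne_zero (hc0 _)⟩⟩ with hqdef
    have h1 : ∀ j < m, p.1.1 j = q.1.1 j := by
      intro j hj
      show η j = τ j
      rw [hτdef]; exact (if_pos hj).symm
    have h2 := (hf p q m).mp h1 k (Nat.lt_succ_self k)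
    have h3 : (f q).1.1 = τ := stepA q hτ
    rw [h3] at h2
    rw [h2, hτdef]
    exact if_pos (Nat.lt_succ_self k)
  rcases (f p).2 with ⟨he, _⟩ | hJ'
  · rw [hσ] at he
    exact absurd he (hIS η hη)
  · rwa [hσ] at hJ'

/-- For countable `I, J ⊆ 2^ω ∖ S`, the structures `M_I`, `M_J` (with `(η₁,n₁) E_m (η₂,n₂)`
iff `η₁↾m = η₂↾m`) are isomorphic iff `I = J`. -/
theorem stmt7 (c : evZero → ℕ) (hc0 : ∀ η, c η ≠ 0) (hcinj : Function.Injective c)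
    (hcsurj : ∀ n : ℕ, n ≠ 0 → ∃ η, c η = n)
    (I J : Set (ℕ → Bool)) (hI : I.Countable) (hJ : J.Countable)
    (hIS : ∀ η ∈ I, η ∉ evZero) (hJS : ∀ η ∈ J, η ∉ evZero) :
    (∃ f : ↥(univM c I) ≃ ↥(univM c J),
        ∀ (p q : ↥(univM c I)) (m : ℕ),
          (∀ k < m, p.1.1 k = q.1.1 k) ↔ (∀ k < m, (f p).1.1 k = (f q).1.1 k)) ↔
      I = J := by
  constructor
  · rintro ⟨f, hf⟩
    have hf' : ∀ (p q : ↥(univM c J)) (m : ℕ),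
        (∀ k < m, p.1.1 k = q.1.1 k) ↔ (∀ k < m, (f.symm p).1.1 k = (f.symm q).1.1 k) := by
      intro p q m
      have h := hf (f.symm p) (f.symm q) m
      simp only [Equiv.apply_symm_apply] at h
      exact h.symm
    exact Set.Subset.antisymm
      (aux_subset c hc0 hcinj I J hIS hJS f hf)
      (aux_subset c hc0 hcinj J I hJS hIS f.symm hf')
  · rintro rfl
    exact ⟨Equiv.refl _, fun p q m => Iff.rfl⟩
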